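/- Let R be a reduced Noetherian commutative ring whose integral closure in its total ring of fractions is finite as an R-module, let t ∈ R be a non-zero-divisor, assume R is integrally closed in the localization R[t⁻¹], and assume moreover that for every prime ideal p of R minimal among primes containing t, the localization of R/(t) at p is a field (i.e., Spec R/(t) is generically regular). Then the ring R/(t) is reduced. (The second assertion of Lemma 2.5 of the paper.) -/

import Mathlib

set_option synthInstance.maxHeartbeats 1000000

section Auxiliary

/-- In a nonreduced Noetherian commutative ring there is a nonzero nilpotent whose
annihilator is prime. -/
theorem aux_exists_prime_ann (A : Type*) [CommRing A] [IsNoetherianRing A]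
    (h : ¬ IsReduced A) :
    ∃ x : A, IsNilpotent x ∧ x ≠ 0 ∧ (Ideal.torsionOf A A x).IsPrime := by
  have hex : ∃ n : A, IsNilpotent n ∧ n ≠ 0 := by
    by_contra hc
    push_neg at hc
    exact h ⟨fun x hx => hc x hx⟩
  obtain ⟨n0, hn0nil, hn0ne⟩ := hex
  set 𝒮 : Set (Submodule A A) :=
    {J | ∃ x : A, IsNilpotent x ∧ x ≠ 0 ∧ J = Ideal.torsionOf A A x} with h𝒮
  obtain ⟨pbar, ⟨x, hxnil, hxne, hpeq⟩, hmax⟩ :=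
    (set_has_maximal_iff_noetherian.mpr inferInstance) 𝒮 ⟨_, n0, hn0nil, hn0ne, rfl⟩
  refine ⟨x, hxnil, hxne, ?_⟩
  constructor
  · intro htop
    apply hxne
    have h1 : (1 : A) ∈ Ideal.torsionOf A A x := htop ▸ Submodule.mem_top
    rw [Ideal.mem_torsionOf_iff, one_smul] at h1
    exact h1
  · intro a b hab
    by_cases hb : b ∈ Ideal.torsionOf A A x
    · exact Or.inr hb
    · left
      have hbx : b * x ≠ 0 := by
        rw [Ideal.mem_torsionOf_iff, smul_eq_mul] at hb
        exact hb
      have hnil' : IsNilpotent (b * x) := by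
        rw [mul_comm]
        exact (Commute.all x b).isNilpotent_mul_right hxnil
      have hsub : Ideal.torsionOf A A x ≤ Ideal.torsionOf A A (b * x) := by
        intro c hc
        rw [Ideal.mem_torsionOf_iff, smul_eq_mul] at hc ⊢
        rw [show c * (b * x) = b * (c * x) by ring, hc, mul_zero]
      have hEq : Ideal.torsionOf A A x = Ideal.torsionOf A A (b * x) := by
        by_contra hne
        exact hmax _ ⟨b * x, hnil', hbx, rfl⟩
          (hpeq ▸ lt_of_le_of_ne (hpeq ▸ hsub) (hpeq ▸ hne))
      rw [hEq, Ideal.mem_torsionOf_iff, smul_eq_mul, ← mul_assoc]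
      rw [Ideal.mem_torsionOf_iff, smul_eq_mul] at hab
      exact hab

/-- The image of a non-zero-divisor in a localization is a non-zero-divisor. -/
theorem aux_nzd_localization {R : Type*} [CommRing R] (M : Submonoid R)
    (S : Type*) [CommRing S] [Algebra R S] [IsLocalization M S]
    (t : R) (ht : t ∈ nonZeroDivisors R) :
    algebraMap R S t ∈ nonZeroDivisors S := by
  suffices H : ∀ z : S, z * algebraMap R S t = 0 → z = 0 from
    ⟨fun z hz => H z (by rw [mul_comm]; exact hz), H⟩
  intro z hz
  obtain ⟨⟨a, s⟩, has⟩ := IsLocalization.surj M z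
  have h1 : algebraMap R S (a * t) = 0 := by
    rw [map_mul, ← has, mul_comm z _, mul_assoc, hz, mul_zero]
  obtain ⟨c, hc⟩ := (IsLocalization.map_eq_zero_iff M S _).mp h1
  have hca : (c : R) * a = 0 := by
    have : ((c : R) * a) * t = 0 := by rw [mul_assoc]; exact hc
    exact ht.2 _ this
  have ha0 : algebraMap R S a = 0 :=
    (IsLocalization.map_eq_zero_iff M S a).mpr ⟨c, hca⟩
  have hs : IsUnit (algebraMap R S (s : R)) := IsLocalization.map_units S s
  have : z * algebraMap R S (s : R) = 0 := by rw [has, ha0]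
  rwa [IsUnit.mul_left_eq_zero hs] at this

/-- Determinant trick: if `y` stabilises a f.g. `R`-submodule of `L` containing a unit,
then `y` is integral over `R`. -/
theorem aux_integral_of_smul_stable {R L : Type*} [CommRing R] [CommRing L] [Algebra R L]
    (N : Submodule R L) (hNfg : N.FG) (y : L) (hy : ∀ n ∈ N, y * n ∈ N)
    (u : L) (hu : u ∈ N) (huu : IsUnit u) : IsIntegral R y := by
  haveI : Module.Finite R ↥N := Module.Finite.iff_fg.mpr hNfg
  let f : Module.End R ↥N := (LinearMap.mulLeft R y).restrict (p := N) (q := N)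
    (fun n hn => hy n hn)
  obtain ⟨p, hmonic, hp⟩ := LinearMap.exists_monic_and_aeval_eq_zero R f
  have hfk : ∀ (k : ℕ) (n : ↥N), (((f ^ k) n : ↥N) : L) = y ^ k * (n : L) := by
    intro k
    induction k with
    | zero => intro n; simp
    | succ k ihk =>
      intro n
      rw [pow_succ, Module.End.mul_apply, ihk (f n)]
      have : ((f n : ↥N) : L) = y * (n : L) := rfl
      rw [this, pow_succ]
      ring
  have key : ∀ (pp : Polynomial R) (n : ↥N),
      (((Polynomial.aeval f pp) n : ↥N) : L) = Polynomial.aeval y pp * (n : L) := by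
    intro pp
    induction pp using Polynomial.induction_on' with
    | add p q hp' hq' =>
      intro n
      simp [map_add, LinearMap.add_apply, hp' n, hq' n, add_mul]
    | monomial k a =>
      intro n
      rw [Polynomial.aeval_monomial, Polynomial.aeval_monomial]
      rw [Module.End.mul_apply, Module.algebraMap_end_apply]
      push_cast [Submodule.coe_smul, hfk k n]
      rw [Algebra.smul_def]
      ring
  have h0 : Polynomial.aeval y p * u = 0 := by
    have := key p ⟨u, hu⟩
    rw [hp] at this
    simpa using this.symm
  exact ⟨p, hmonic, by rwa [IsUnit.mul_left_eq_zero huu] at h0⟩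

/-- In a Noetherian local ring whose maximal ideal is principal, the maximal ideal is
minimal over any of its non-zero-divisor members. -/
theorem aux_local_minimal {B : Type*} [CommRing B] [IsNoetherianRing B] [IsLocalRing B]
    (e t₁ : B) (ht₁ : t₁ ∈ nonZeroDivisors B)
    (hm : IsLocalRing.maximalIdeal B = Ideal.span {e})
    (Q : Ideal B) (hQ : Q.IsPrime) (htQ : t₁ ∈ Q) (hQm : Q ≤ IsLocalRing.maximalIdeal B) :
    Q = IsLocalRing.maximalIdeal B := by
  by_cases he : e ∈ Q
  · refine le_antisymm hQm ?_
    rw [hm, Ideal.span_le, Set.singleton_subset_iff]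
    exact he
  · exfalso
    have hQsmul : (Q : Submodule B B) ≤ (IsLocalRing.maximalIdeal B) • (Q : Submodule B B) := by
      intro a ha
      have ham : a ∈ Ideal.span {e} := hm ▸ hQm ha
      obtain ⟨c, hc⟩ := Ideal.mem_span_singleton'.mp ham
      have hcQ : c ∈ Q := by
        have hce : c * e ∈ Q := by rw [hc]; exact ha
        rcases hQ.mem_or_mem hce with h | h
        · exact h
        · exact absurd h he
      have heM : e ∈ IsLocalRing.maximalIdeal B := hm ▸ Ideal.mem_span_singleton_self e
      have : a = e • c := by rw [smul_eq_mul, mul_comm, hc]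
      rw [this]
      exact Submodule.smul_mem_smul heM hcQ
    have hbot : Q = ⊥ :=
      Submodule.eq_bot_of_le_smul_of_le_jacobson_bot (IsLocalRing.maximalIdeal B) _
        (IsNoetherian.noetherian _) hQsmul
        (IsLocalRing.jacobson_eq_maximalIdeal ⊥ bot_ne_top).ge
    have ht0 : t₁ = 0 := by
      have := hbot ▸ htQ
      simpa using this
    have : (1 : B) = 0 := ht₁.2 1 (by rw [one_mul, ht0])
    exact one_ne_zero this

end Auxiliary

/-- Let `R` be a reduced Noetherian ring with finite normalization, `t` a
non-zero-divisor, `R` integrally closed in `R[t⁻¹]`, and suppose that for every prime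
`p` minimal over `(t)` the localization of `R/(t)` at `p` is a field.  Then `R/(t)` is
reduced. -/
theorem special_fiber_reduced_of_generically_regular
    (R : Type*) [CommRing R] [IsNoetherianRing R] [IsReduced R]
    (hfin : Module.Finite R (integralClosure R (FractionRing R)))
    (t : R) (ht : t ∈ nonZeroDivisors R)
    (hic : ∀ x : Localization.Away t, IsIntegral R x →
      x ∈ (algebraMap R (Localization.Away t)).range)
    (hgen : ∀ (p : Ideal R) [p.IsPrime], p ∈ (Ideal.span {t}).minimalPrimes →
      IsField (Localization
        (Submonoid.map (Ideal.Quotient.mk (Ideal.span {t})) p.primeCompl))) :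
    IsReduced (R ⧸ Ideal.span {t}) := by
  by_contra hred
  set I : Ideal R := Ideal.span {t} with hIdef
  obtain ⟨xbar, hxnil, hxne, hpprime⟩ := aux_exists_prime_ann (R ⧸ I) hred
  set pbar : Ideal (R ⧸ I) := Ideal.torsionOf (R ⧸ I) (R ⧸ I) xbar with hpbar
  obtain ⟨x, hx⟩ := Ideal.Quotient.mk_surjective xbar
  set P : Ideal R := pbar.comap (Ideal.Quotient.mk I) with hPdef
  haveI hPprime : P.IsPrime := Ideal.IsPrime.comap _
  have hmemP : ∀ r : R, r ∈ P ↔ ∃ c : R, r * x = c * t := by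
    intro r
    constructor
    · intro hr
      have h1 : Ideal.Quotient.mk I r • xbar = 0 := (Ideal.mem_torsionOf_iff _ _).mp hr
      rw [smul_eq_mul, ← hx, ← map_mul, Ideal.Quotient.eq_zero_iff_mem] at h1
      obtain ⟨c, hc⟩ := Ideal.mem_span_singleton'.mp h1
      exact ⟨c, hc.symm⟩
    · rintro ⟨c, hc⟩
      show Ideal.Quotient.mk I r ∈ pbar
      rw [hpbar, Ideal.mem_torsionOf_iff, smul_eq_mul, ← hx, ← map_mul,
        Ideal.Quotient.eq_zero_iff_mem]
      exact Ideal.mem_span_singleton'.mpr ⟨c, hc.symm⟩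
  have htP : t ∈ P := (hmemP t).mpr ⟨x, mul_comm t x⟩
  have hone : (1 : R) ∉ P := by
    intro h1
    obtain ⟨c, hc⟩ := (hmemP 1).mp h1
    rw [one_mul] at hc
    apply hxne
    rw [← hx, Ideal.Quotient.eq_zero_iff_mem]
    exact Ideal.mem_span_singleton'.mpr ⟨c, hc.symm⟩
  by_cases hcase : ∀ q ∈ P, ∀ c : R, q * x = c * t → c ∈ P
  · -- Branch 1 : `x/t` is integral over `R`, contradiction.
    set L := Localization.Away t with hL
    have htu : IsUnit (algebraMap R L t) := IsLocalization.Away.algebraMap_isUnit t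
    set s : Submonoid.powers t := ⟨t, Submonoid.mem_powers t⟩ with hs
    set y : L := IsLocalization.mk' L x s with hy
    set N : Submodule R L := Submodule.map (Algebra.linearMap R L) (P : Submodule R R) with hN
    have hmemN : ∀ z : L, z ∈ N ↔ ∃ a ∈ P, algebraMap R L a = z := by
      intro z
      constructor
      · rintro ⟨a, haP, rfl⟩
        exact ⟨a, haP, rfl⟩
      · rintro ⟨a, haP, rfl⟩
        exact ⟨a, haP, rfl⟩
    have hstab : ∀ n ∈ N, y * n ∈ N := by
      intro n hn
      obtain ⟨q, hq, rfl⟩ := (hmemN n).mp hn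
      obtain ⟨c, hc⟩ := (hmemP q).mp hq
      have hcP : c ∈ P := hcase q hq c hc
      refine (hmemN _).mpr ⟨c, hcP, ?_⟩
      have : y * algebraMap R L q = algebraMap R L c := by
        rw [hy, mul_comm, IsLocalization.mul_mk'_eq_mk'_of_mul,
          IsLocalization.mk'_eq_iff_eq_mul, hc, map_mul]
      exact this.symm
    have hNfg : N.FG := (IsNoetherian.noetherian (P : Submodule R R)).map _
    have hintegral : IsIntegral R y := aux_integral_of_smul_stable N hNfg y hstab
      (algebraMap R L t) ((hmemN _).mpr ⟨t, htP, rfl⟩) htu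
    obtain ⟨r, hr⟩ := hic y hintegral
    have heq : algebraMap R L x = algebraMap R L (r * t) := by
      rw [map_mul, hr, hy, IsLocalization.mk'_spec]
    obtain ⟨c, hc⟩ := (IsLocalization.eq_iff_exists (Submonoid.powers t) L).mp heq
    have hcnzd : (c : R) ∈ nonZeroDivisors R := by
      obtain ⟨k, hk⟩ := c.2
      rw [← hk]
      exact pow_mem ht k
    have hx_rt : x = r * t := (mul_cancel_left_mem_nonZeroDivisors hcnzd).mp hc
    exact hone ((hmemP 1).mpr ⟨r, by rw [one_mul, hx_rt]⟩)
  · -- Branch 2 : `P` is minimal over `(t)`, contradiction via `hgen`.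
    push_neg at hcase
    obtain ⟨q, hqP, c₁, hqx, hrP⟩ := hcase
    set B := Localization.AtPrime P with hB
    haveI hBnoeth : IsNoetherianRing B :=
      IsLocalization.isNoetherianRing P.primeCompl B inferInstance
    have ht1 : algebraMap R B t ∈ nonZeroDivisors B :=
      aux_nzd_localization P.primeCompl B t ht
    have hcomapm : (IsLocalRing.maximalIdeal B).comap (algebraMap R B) = P :=
      Localization.AtPrime.comap_maximalIdeal
    have hφmem : ∀ a : R, algebraMap R B a ∈ IsLocalRing.maximalIdeal B ↔ a ∈ P := by
      intro a
      rw [← Ideal.mem_comap, hcomapm]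
    obtain ⟨ru, hru'⟩ : IsUnit (algebraMap R B c₁) :=
      IsLocalization.map_units B (⟨c₁, hrP⟩ : P.primeCompl)
    set e : B := algebraMap R B q * ↑ru⁻¹ with he
    have heM : e ∈ IsLocalRing.maximalIdeal B :=
      Ideal.mul_mem_right _ _ ((hφmem q).mpr hqP)
    have hxe : algebraMap R B x * e = algebraMap R B t := by
      have h1 : algebraMap R B q * algebraMap R B x
          = algebraMap R B c₁ * algebraMap R B t := by
        rw [← map_mul, ← map_mul, hqx]
      calc algebraMap R B x * e = (algebraMap R B q * algebraMap R B x) * ↑ru⁻¹ := by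
            rw [he]; ring
        _ = (algebraMap R B c₁ * algebraMap R B t) * ↑ru⁻¹ := by rw [h1]
        _ = algebraMap R B t * (↑ru * ↑ru⁻¹) := by rw [hru']; ring
        _ = algebraMap R B t := by rw [Units.mul_inv, mul_one]
    have hann : ∀ z : B, z * algebraMap R B x = 0 → z = 0 := by
      intro z hz
      have : z * algebraMap R B t = 0 := by
        rw [← hxe, ← mul_assoc, hz, zero_mul]
      exact ht1.2 z this
    have hcolon : ∀ a ∈ IsLocalRing.maximalIdeal B,
        ∃ cc : B, a * algebraMap R B x = algebraMap R B t * cc := by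
      intro a ha
      rw [← Localization.AtPrime.map_eq_maximalIdeal] at ha
      obtain ⟨⟨a₀, s₀⟩, has⟩ := (IsLocalization.mem_map_algebraMap_iff P.primeCompl B).mp ha
      obtain ⟨c₀, hc₀⟩ := (hmemP a₀).mp a₀.2
      obtain ⟨su, hsu'⟩ : IsUnit (algebraMap R B (s₀ : R)) := IsLocalization.map_units B s₀
      refine ⟨algebraMap R B c₀ * ↑su⁻¹, ?_⟩
      have h2 : (a * algebraMap R B x) * ↑su = algebraMap R B t * algebraMap R B c₀ := by
        rw [hsu']
        calc a * algebraMap R B x * algebraMap R B (s₀ : R)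
            = (a * algebraMap R B (s₀ : R)) * algebraMap R B x := by ring
          _ = algebraMap R B a₀ * algebraMap R B x := by rw [has]
          _ = algebraMap R B ((a₀ : R) * x) := by rw [map_mul]
          _ = algebraMap R B (c₀ * t) := by rw [hc₀]
          _ = algebraMap R B t * algebraMap R B c₀ := by rw [map_mul]; ring
      calc a * algebraMap R B x
          = ((a * algebraMap R B x) * ↑su) * ↑su⁻¹ := by
            rw [mul_assoc, Units.mul_inv, mul_one]
        _ = (algebraMap R B t * algebraMap R B c₀) * ↑su⁻¹ := by rw [h2]
        _ = algebraMap R B t * (algebraMap R B c₀ * ↑su⁻¹) := by ring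
    have hmspan : IsLocalRing.maximalIdeal B = Ideal.span {e} := by
      apply le_antisymm
      · intro a ha
        obtain ⟨cc, hcc⟩ := hcolon a ha
        have hsub : (a - e * cc) * algebraMap R B x = 0 := by
          rw [sub_mul, hcc, ← hxe]
          ring
        have ha' : a = e * cc := sub_eq_zero.mp (hann _ hsub)
        rw [ha']
        exact Ideal.mem_span_singleton'.mpr ⟨cc, mul_comm cc e⟩
      · rw [Ideal.span_le, Set.singleton_subset_iff]
        exact heM
    haveI hmprime : (IsLocalRing.maximalIdeal B).IsPrime :=
      (IsLocalRing.maximalIdeal.isMaximal B).isPrime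
    have hmin : P ∈ I.minimalPrimes := by
      constructor
      · exact ⟨hPprime, by
          rw [hIdef, Ideal.span_le, Set.singleton_subset_iff]; exact htP⟩
      · rintro Q ⟨hQpr, hIQ⟩ hQP
        haveI := hQpr
        have hdisj : Disjoint (P.primeCompl : Set R) (Q : Set R) :=
          Set.disjoint_left.mpr fun a haC haQ => haC (hQP haQ)
        set ψ := IsLocalization.orderIsoOfPrime P.primeCompl B with hψ
        set Q₁ : Ideal B := (ψ.symm ⟨Q, hQpr, hdisj⟩).1 with hQ₁
        have hQ₁pr : Q₁.IsPrime := (ψ.symm ⟨Q, hQpr, hdisj⟩).2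
        have hcomapQ₁ : Q₁.comap (algebraMap R B) = Q := by
          have h3 := ψ.apply_symm_apply ⟨Q, hQpr, hdisj⟩
          exact congrArg Subtype.val h3
        have htQ₁ : algebraMap R B t ∈ Q₁ := by
          have h4 : t ∈ Q₁.comap (algebraMap R B) := by
            rw [hcomapQ₁]
            exact hIQ (by rw [hIdef]; exact Ideal.mem_span_singleton_self t)
          exact h4
        have hQ₁m : Q₁ ≤ IsLocalRing.maximalIdeal B := by
          have h5 : ψ (ψ.symm ⟨Q, hQpr, hdisj⟩) ≤ ψ ⟨IsLocalRing.maximalIdeal B, hmprime⟩ := by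
            rw [ψ.apply_symm_apply]
            show Q ≤ (IsLocalRing.maximalIdeal B).comap (algebraMap R B)
            rw [hcomapm]
            exact hQP
          exact ψ.le_iff_le.mp h5
        have h6 : Q₁ = IsLocalRing.maximalIdeal B :=
          aux_local_minimal e (algebraMap R B t) ht1 hmspan Q₁ hQ₁pr htQ₁ hQ₁m
        have h7 : Q = P := by rw [← hcomapQ₁, h6, hcomapm]
        rw [h7]
    have hfield := hgen P hmin
    set C := Localization (Submonoid.map (Ideal.Quotient.mk I) P.primeCompl) with hC
    letI : Field C := hfield.toField
    haveI : IsReduced C := inferInstance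
    have hnmap : algebraMap (R ⧸ I) C xbar ≠ 0 := by
      intro h0
      obtain ⟨sb, hsb⟩ :=
        (IsLocalization.map_eq_zero_iff (Submonoid.map (Ideal.Quotient.mk I) P.primeCompl)
          C xbar).mp h0
      obtain ⟨s₀, hs₀, hs₀'⟩ := sb.2
      apply hs₀
      show Ideal.Quotient.mk I s₀ ∈ pbar
      rw [hpbar, Ideal.mem_torsionOf_iff, smul_eq_mul, hs₀']
      exact hsb
    exact hnmap (IsReduced.eq_zero _ (hxnil.map (algebraMap (R ⧸ I) C)))
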